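/- Let Σ be an n×n real symmetric positive definite matrix, K a d×n real matrix, and σ_u ∈ ℝ. Let M be the (n+d)×(n+d) symmetric block matrix M = [[Σ, ΣKᵀ],[KΣ, KΣKᵀ + σ_u²·I_d]]. Then for every vector v ∈ ℝ^{n+d} with ‖v‖ = 1, vᵀMv ≥ σ_u²·min( 1/2, λ_min(Σ)/(2·‖KΣKᵀ‖ + σ_u²) ); equivalently, the smallest eigenvalue of M is at least σ_u²·min( 1/2, λ_min(Σ)/(2·‖KΣKᵀ‖ + σ_u²) ). -/

import Mathlib

open Matrix

/-- Operator 2-norm of a real matrix. -/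
noncomputable def opNorm {m n : ℕ} (M : Matrix (Fin m) (Fin n) ℝ) : ℝ :=
  ‖(Matrix.toEuclideanLin.trans LinearMap.toContinuousLinearMap) M‖

lemma quad_le_opNorm {d : ℕ} (A : Matrix (Fin d) (Fin d) ℝ) (y : Fin d → ℝ) :
    y ⬝ᵥ (A *ᵥ y) ≤ opNorm A * ∑ i, y i ^ 2 := by
  set y' : EuclideanSpace ℝ (Fin d) := (WithLp.equiv 2 (Fin d → ℝ)).symm y with hy'
  have h1 : y ⬝ᵥ (A *ᵥ y) =
      inner ℝ ((Matrix.toEuclideanLin.trans LinearMap.toContinuousLinearMap) A y') y' := by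
    simp [EuclideanSpace.inner_eq_star_dotProduct, toEuclideanLin_apply, hy',
      dotProduct_comm, dotProduct, mul_comm]
  have h2 : ∑ i, y i ^ 2 = ‖y'‖ ^ 2 := by
    rw [EuclideanSpace.norm_eq]
    rw [Real.sq_sqrt (by positivity)]
    simp [hy', sq_abs]
  rw [h1, h2]
  calc inner ℝ ((Matrix.toEuclideanLin.trans LinearMap.toContinuousLinearMap) A y') y'
      ≤ ‖(Matrix.toEuclideanLin.trans LinearMap.toContinuousLinearMap) A y'‖ * ‖y'‖ :=
        real_inner_le_norm _ _
    _ ≤ (opNorm A * ‖y'‖) * ‖y'‖ := by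
        apply mul_le_mul_of_nonneg_right _ (norm_nonneg _)
        exact ContinuousLinearMap.le_opNorm _ _
    _ = opNorm A * ‖y'‖ ^ 2 := by ring

lemma sub_smul_posSemidef {n : ℕ} {S : Matrix (Fin n) (Fin n) ℝ} (hS : S.PosDef) :
    (S - (⨅ i, hS.1.eigenvalues i) • (1 : Matrix (Fin n) (Fin n) ℝ)).PosSemidef := by
  set lam := ⨅ i, hS.1.eigenvalues i with hlam
  have hU := hS.1.spectral_theorem
  simp only [Unitary.conjStarAlgAut_apply, Unitary.coe_star] at hU
  set U : Matrix (Fin n) (Fin n) ℝ := (hS.1.eigenvectorUnitary : Matrix (Fin n) (Fin n) ℝ)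
  have hUU : U * star U = 1 := (Matrix.mem_unitaryGroup_iff).mp hS.1.eigenvectorUnitary.2
  have key : S - lam • 1 = U * (Matrix.diagonal (fun i => hS.1.eigenvalues i - lam)) * star U := by
    have h1 : (lam • (1 : Matrix (Fin n) (Fin n) ℝ)) = U * (lam • 1) * star U := by
      rw [Matrix.mul_smul, Matrix.smul_mul, Matrix.mul_one, hUU]
    nth_rewrite 1 [hU]
    rw [h1]
    rw [← Matrix.sub_mul, ← Matrix.mul_sub]
    congr 1
    congr 1
    rw [smul_one_eq_diagonal, diagonal_sub]
    rfl
  rw [key]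
  have hd : Matrix.PosSemidef (Matrix.diagonal (fun i => hS.1.eigenvalues i - lam)) := by
    apply Matrix.PosSemidef.diagonal
    intro i
    simp only [Pi.zero_apply, sub_nonneg]
    exact ciInf_le (Finite.bddBelow_range _) i
  simpa [Matrix.star_eq_conjTranspose] using hd.mul_mul_conjTranspose_same U

lemma quad_ge_lam {n : ℕ} {S : Matrix (Fin n) (Fin n) ℝ} (hS : S.PosDef) (x : Fin n → ℝ) :
    (⨅ i, hS.1.eigenvalues i) * ∑ i, x i ^ 2 ≤ x ⬝ᵥ (S *ᵥ x) := by
  have h := (sub_smul_posSemidef hS).dotProduct_mulVec_nonneg x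
  rw [star_trivial, Matrix.sub_mulVec, dotProduct_sub, Matrix.smul_mulVec,
    Matrix.one_mulVec, dotProduct_smul] at h
  have hx : x ⬝ᵥ x = ∑ i, x i ^ 2 := by simp [dotProduct, sq]
  rw [hx, smul_eq_mul] at h
  linarith [h]

lemma quad_decomp {n d : ℕ} (S : Matrix (Fin n) (Fin n) ℝ) (K : Matrix (Fin d) (Fin n) ℝ)
    (σu : ℝ) (v : (Fin n ⊕ Fin d) → ℝ) :
    v ⬝ᵥ ((Matrix.fromBlocks S (S * Kᵀ) (K * S)
        (K * S * Kᵀ + σu ^ 2 • (1 : Matrix (Fin d) (Fin d) ℝ))) *ᵥ v) =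
    ((v ∘ Sum.inl) + Kᵀ *ᵥ (v ∘ Sum.inr)) ⬝ᵥ (S *ᵥ ((v ∘ Sum.inl) + Kᵀ *ᵥ (v ∘ Sum.inr)))
      + σu ^ 2 * ((v ∘ Sum.inr) ⬝ᵥ (v ∘ Sum.inr)) := by
  have hv : v = Sum.elim (v ∘ Sum.inl) (v ∘ Sum.inr) := (Sum.elim_comp_inl_inr v).symm
  set x := v ∘ Sum.inl
  set y := v ∘ Sum.inr
  nth_rewrite 1 [hv, hv]
  rw [fromBlocks_mulVec, sumElim_dotProduct_sumElim]
  have hT3 : ∀ z : Fin n → ℝ, y ⬝ᵥ (K *ᵥ z) = (Kᵀ *ᵥ y) ⬝ᵥ z := by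
    intro z
    rw [dotProduct_mulVec, ← mulVec_transpose]
  simp only [add_mulVec, mulVec_add, dotProduct_add, add_dotProduct, ← mulVec_mulVec,
    smul_mulVec, one_mulVec, dotProduct_smul, hT3, smul_eq_mul, Sum.elim_comp_inl,
    Sum.elim_comp_inr]
  ring

lemma core_ineq {n d : ℕ} {S : Matrix (Fin n) (Fin n) ℝ} (K : Matrix (Fin d) (Fin n) ℝ)
    (σu : ℝ) (hS : S.PosDef) (x : Fin n → ℝ) (y : Fin d → ℝ) :
    σu ^ 2 * min (1 / 2)
        ((⨅ i, hS.1.eigenvalues i) / (2 * opNorm (K * S * Kᵀ) + σu ^ 2)) *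
        ((∑ i, x i ^ 2) + ∑ i, y i ^ 2)
      ≤ (x + Kᵀ *ᵥ y) ⬝ᵥ (S *ᵥ (x + Kᵀ *ᵥ y)) + σu ^ 2 * ∑ i, y i ^ 2 := by
  set lam := ⨅ i, hS.1.eigenvalues i with hlam
  set B := opNorm (K * S * Kᵀ) with hBdef
  set b := Kᵀ *ᵥ y with hb
  set X := ∑ i, x i ^ 2 with hX
  set Y := ∑ i, y i ^ 2 with hY
  set B2 := ∑ i, b i ^ 2 with hB2
  set P := ∑ i, x i * b i with hP
  set Qw := (x + b) ⬝ᵥ (S *ᵥ (x + b)) with hQwdef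
  set W := ∑ i, (x i + b i) ^ 2 with hW
  have hX0 : 0 ≤ X := Finset.sum_nonneg fun i _ => sq_nonneg _
  have hY0 : 0 ≤ Y := Finset.sum_nonneg fun i _ => sq_nonneg _
  have hB20 : 0 ≤ B2 := Finset.sum_nonneg fun i _ => sq_nonneg _
  have hB0 : 0 ≤ B := norm_nonneg _
  have hlam0 : 0 ≤ lam := by
    rcases Nat.eq_zero_or_pos n with h0 | h0
    · subst h0; simp [hlam]
    · haveI : Nonempty (Fin n) := ⟨⟨0, h0⟩⟩
      exact le_ciInf fun i => (hS.eigenvalues_pos i).le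
  have hQw0 : 0 ≤ Qw := by
    have := hS.posSemidef.dotProduct_mulVec_nonneg (x + b)
    rwa [star_trivial] at this
  have hQwlam : lam * W ≤ Qw := quad_ge_lam hS (x + b)
  have hexp : W = X + 2 * P + B2 := by
    have hpt : ∀ i : Fin n, (x i + b i) ^ 2 = x i ^ 2 + 2 * (x i * b i) + b i ^ 2 :=
      fun i => by ring
    rw [hW, hX, hP, hB2, Finset.sum_congr rfl fun i _ => hpt i, Finset.sum_add_distrib,
      Finset.sum_add_distrib, ← Finset.mul_sum]
  have hbSb : y ⬝ᵥ ((K * S * Kᵀ) *ᵥ y) = b ⬝ᵥ (S *ᵥ b) := by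
    rw [← mulVec_mulVec, ← mulVec_mulVec, dotProduct_mulVec, ← mulVec_transpose, ← hb]
  have hlamB2 : lam * B2 ≤ B * Y := by
    calc lam * B2 ≤ b ⬝ᵥ (S *ᵥ b) := quad_ge_lam hS b
      _ = y ⬝ᵥ ((K * S * Kᵀ) *ᵥ y) := hbSb.symm
      _ ≤ B * Y := quad_le_opNorm _ y
  have hcs : P ^ 2 ≤ X * B2 := by
    have := Finset.sum_mul_sq_le_sq_mul_sq Finset.univ x b
    simpa [hX, hB2, hP] using this
  have P1 : 2 * B * σu ^ 2 * X ≤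
      2 * B * (2 * B + σu ^ 2) * W + σu ^ 2 * (2 * B + σu ^ 2) * B2 := by
    have hpt : ∀ i, 2 * B * σu ^ 2 * x i ^ 2 ≤
        2 * B * (2 * B + σu ^ 2) * (x i + b i) ^ 2 + σu ^ 2 * (2 * B + σu ^ 2) * b i ^ 2 := by
      intro i
      nlinarith [sq_nonneg (2 * B * x i + (2 * B + σu ^ 2) * b i)]
    calc 2 * B * σu ^ 2 * X = ∑ i, 2 * B * σu ^ 2 * x i ^ 2 := by rw [hX, Finset.mul_sum]
      _ ≤ ∑ i, (2 * B * (2 * B + σu ^ 2) * (x i + b i) ^ 2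
            + σu ^ 2 * (2 * B + σu ^ 2) * b i ^ 2) := Finset.sum_le_sum fun i _ => hpt i
      _ = 2 * B * (2 * B + σu ^ 2) * W + σu ^ 2 * (2 * B + σu ^ 2) * B2 := by
          rw [Finset.sum_add_distrib, hW, hB2, ← Finset.mul_sum, ← Finset.mul_sum]
  clear_value lam B b X Y B2 P Qw W
  clear hlam hBdef hb hX hY hB2 hP hQwdef hW hbSb
  rcases eq_or_ne σu 0 with hσ | hσ
  · subst hσ
    norm_num
    linarith [hQw0]
  have hs : (0:ℝ) < σu ^ 2 := by positivity
  set D := 2 * B + σu ^ 2 with hD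
  have hD0 : (0:ℝ) < D := by positivity
  clear_value D
  set m := min (1/2 : ℝ) (lam / D) with hm
  have hm2 : m ≤ 1/2 := min_le_left _ _
  have hmD : m * D ≤ lam := by
    have h := min_le_right (1/2 : ℝ) (lam / D)
    calc m * D ≤ (lam / D) * D := by nlinarith
      _ = lam := by field_simp
  have hm0 : 0 ≤ m := le_min (by norm_num) (div_nonneg hlam0 hD0.le)
  clear_value m
  rcases eq_or_lt_of_le hB0 with hBz | hBp
  · -- B = 0
    have hlamB2z : lam * B2 = 0 :=
      le_antisymm (by nlinarith [hlamB2]) (mul_nonneg hlam0 hB20)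
    have hlamP : lam * P = 0 := by
      have h1 : (lam * P) ^ 2 ≤ (lam * X) * (lam * B2) := by
        nlinarith [mul_le_mul_of_nonneg_left hcs (sq_nonneg lam)]
      have h2 : (lam * P) ^ 2 ≤ 0 := by rw [hlamB2z] at h1; nlinarith [mul_nonneg hlam0 hX0]
      have h3 := le_antisymm h2 (sq_nonneg _)
      exact pow_eq_zero_iff (two_ne_zero) |>.mp h3
    have hlamW : lam * W = lam * X + 2 * (lam * P) + lam * B2 := by rw [hexp]; ring
    have hmslam : m * σu ^ 2 ≤ lam := by
      have hDs : D = σu ^ 2 := by rw [hD, ← hBz]; ring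
      rw [← hDs]; exact hmD
    nlinarith [hQwlam, hlamW, hlamP, hlamB2z, mul_le_mul_of_nonneg_right hmslam hX0,
      mul_le_mul_of_nonneg_right hm2 (mul_nonneg hs.le hY0), hY0, hs]
  · -- B > 0
    have a1 : lam * (2 * B * σu ^ 2 * X) ≤
        lam * (2 * B * D * W + σu ^ 2 * D * B2) := mul_le_mul_of_nonneg_left P1 hlam0
    have a2 : (2 * B * D) * (lam * W) ≤ (2 * B * D) * Qw :=
      mul_le_mul_of_nonneg_left hQwlam (by positivity)
    have a3 : (σu ^ 2 * D) * (lam * B2) ≤ (σu ^ 2 * D) * (B * Y) :=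
      mul_le_mul_of_nonneg_left hlamB2 (by positivity)
    have f1 : 2 * B * σu ^ 2 * (lam * X) ≤ 2 * B * D * Qw + σu ^ 2 * D * (B * Y) := by
      linarith [a1, a2, a3]
    have g : 2 * σu ^ 2 * (lam * X) ≤ 2 * D * Qw + σu ^ 2 * D * Y := by
      have h1 : B * (2 * σu ^ 2 * (lam * X)) ≤ B * (2 * D * Qw + σu ^ 2 * D * Y) := by
        linarith [f1]
      exact le_of_mul_le_mul_left h1 hBp
    have q1 : (2 * σu ^ 2 * X) * (m * D) ≤ (2 * σu ^ 2 * X) * lam :=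
      mul_le_mul_of_nonneg_left hmD (by positivity)
    have q2 : (2 * σu ^ 2 * D * Y) * m ≤ (2 * σu ^ 2 * D * Y) * (1/2) :=
      mul_le_mul_of_nonneg_left hm2 (by positivity)
    have final : 2 * D * (σu ^ 2 * m * (X + Y)) ≤ 2 * D * (Qw + σu ^ 2 * Y) := by
      linarith [g, q1, q2]
    exact le_of_mul_le_mul_left final (by positivity : (0:ℝ) < 2 * D)

lemma main_quad {n d : ℕ} {S : Matrix (Fin n) (Fin n) ℝ} (K : Matrix (Fin d) (Fin n) ℝ)
    (σu : ℝ) (hS : S.PosDef) (v : (Fin n ⊕ Fin d) → ℝ) :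
    σu ^ 2 * min (1 / 2)
        ((⨅ i, hS.1.eigenvalues i) / (2 * opNorm (K * S * Kᵀ) + σu ^ 2)) *
        (∑ i, v i ^ 2)
      ≤ v ⬝ᵥ ((Matrix.fromBlocks S (S * Kᵀ) (K * S)
          (K * S * Kᵀ + σu ^ 2 • (1 : Matrix (Fin d) (Fin d) ℝ))) *ᵥ v) := by
  rw [quad_decomp]
  have hsum : (∑ i, v i ^ 2) =
      (∑ i, (v ∘ Sum.inl) i ^ 2) + ∑ i, (v ∘ Sum.inr) i ^ 2 := Fintype.sum_sum_type _
  have hdot : (v ∘ Sum.inr) ⬝ᵥ (v ∘ Sum.inr) = ∑ i, (v ∘ Sum.inr) i ^ 2 := by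
    simp [dotProduct, sq]
  rw [hsum, hdot]
  exact core_ineq K σu hS (v ∘ Sum.inl) (v ∘ Sum.inr)

theorem block_matrix_min_eigenvalue_bound
    {n d : ℕ} (S : Matrix (Fin n) (Fin n) ℝ) (K : Matrix (Fin d) (Fin n) ℝ)
    (σu : ℝ) (hS : S.PosDef) :
    (∀ v : (Fin n ⊕ Fin d) → ℝ, (∑ i, v i ^ 2) = 1 →
        σu ^ 2 * min (1 / 2)
            ((⨅ i, hS.1.eigenvalues i) / (2 * opNorm (K * S * Kᵀ) + σu ^ 2))
          ≤ v ⬝ᵥ ((Matrix.fromBlocks S (S * Kᵀ) (K * S)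
              (K * S * Kᵀ + σu ^ 2 • (1 : Matrix (Fin d) (Fin d) ℝ))) *ᵥ v)) ∧
      (Matrix.fromBlocks S (S * Kᵀ) (K * S)
            (K * S * Kᵀ + σu ^ 2 • (1 : Matrix (Fin d) (Fin d) ℝ))
          - (σu ^ 2 * min (1 / 2)
              ((⨅ i, hS.1.eigenvalues i) /
                (2 * opNorm (K * S * Kᵀ) + σu ^ 2))) • 1).PosSemidef := by
  constructor
  · intro v hv
    have := main_quad K σu hS v
    rwa [hv, mul_one] at this
  · rw [Matrix.posSemidef_iff_dotProduct_mulVec]; constructor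
    · have hsymm : Sᵀ = S := by
        simpa [Matrix.conjTranspose_eq_transpose_of_trivial, Matrix.IsSymm] using hS.1
      apply Matrix.IsHermitian.sub
      · rw [isHermitian_fromBlocks_iff]
        refine ⟨hS.1, ?_, ?_, ?_⟩
        · simp [Matrix.conjTranspose_eq_transpose_of_trivial, Matrix.transpose_mul,
            Matrix.transpose_transpose, hsymm]
        · simp [Matrix.conjTranspose_eq_transpose_of_trivial, Matrix.transpose_mul,
            Matrix.transpose_transpose, hsymm]
        · show _ = _
          simp [Matrix.conjTranspose_eq_transpose_of_trivial, Matrix.transpose_mul,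
            Matrix.transpose_transpose, Matrix.transpose_smul, hsymm, Matrix.mul_assoc]
      · show _ = _
        simp [Matrix.conjTranspose_eq_transpose_of_trivial, Matrix.transpose_smul]
    · intro x
      rw [star_trivial, Matrix.sub_mulVec, dotProduct_sub, Matrix.smul_mulVec,
        Matrix.one_mulVec, dotProduct_smul, smul_eq_mul]
      have h1 := main_quad K σu hS x
      have h2 : x ⬝ᵥ x = ∑ i, x i ^ 2 := by simp [dotProduct, sq]
      rw [h2]
      rw [sub_nonneg]
      linarith [h1]
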